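/- (Proposition 2, doubling map: valence two / area doubling.) Let A, B ∈ ℝ with B < 0 and set s = Real.sqrt (-B). Define F : ℝ × ℝ → ℝ × ℝ by F(q, p) = ( (2Bq⁴ + Aq² + p²)/(2·s·q·p), (1/(4s))·((4Bq⁴ - p²)/q² + q²(4B²q⁴ + 4ABq² + A²)/p²) ). Then at every point (q, p) with q ≠ 0 and p ≠ 0, F is differentiable and the determinant of its derivative (Jacobian determinant) equals 2; i.e. the doubling map is a canonical transformation of valence two, doubling the area element dq∧dp. -/

import Mathlib

/-- Proposition 2, doubling map: valence two: the doubling map `F` on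
the phase plane of the Duffing oscillator is differentiable at every point with
`q ≠ 0`, `p ≠ 0`, and its Jacobian determinant equals `2`, i.e. it is a canonical
transformation of valence two, doubling the area element `dq ∧ dp`. -/
theorem duffing_doubling_map_valence_two
    (A B s : ℝ) (hB : B < 0) (hs : s = Real.sqrt (-B))
    (F : ℝ × ℝ → ℝ × ℝ)
    (hF : ∀ x : ℝ × ℝ,
      F x = ((2 * B * x.1 ^ 4 + A * x.1 ^ 2 + x.2 ^ 2) / (2 * s * x.1 * x.2),
        1 / (4 * s) * ((4 * B * x.1 ^ 4 - x.2 ^ 2) / x.1 ^ 2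
          + x.1 ^ 2 * (4 * B ^ 2 * x.1 ^ 4 + 4 * A * B * x.1 ^ 2 + A ^ 2) / x.2 ^ 2))) :
    ∀ q p : ℝ, q ≠ 0 → p ≠ 0 →
      DifferentiableAt ℝ F (q, p) ∧ (fderiv ℝ F (q, p)).det = 2 := by
  have hFe : F = fun x : ℝ × ℝ =>
      ((2 * B * x.1 ^ 4 + A * x.1 ^ 2 + x.2 ^ 2) / (2 * s * x.1 * x.2),
        1 / (4 * s) * ((4 * B * x.1 ^ 4 - x.2 ^ 2) / x.1 ^ 2
          + x.1 ^ 2 * (4 * B ^ 2 * x.1 ^ 4 + 4 * A * B * x.1 ^ 2 + A ^ 2) / x.2 ^ 2)) :=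
    funext hF
  subst hFe
  have hs0 : (0:ℝ) < s := by rw [hs]; exact Real.sqrt_pos.mpr (by linarith)
  have hs2 : s ^ 2 = -B := by rw [hs, Real.sq_sqrt (by linarith)]
  intro q p hq hp
  have hden1 : 2 * s * q * p ≠ 0 := by positivity
  have hq2 : (q:ℝ) ^ 2 ≠ 0 := pow_ne_zero 2 hq
  have hp2 : (p:ℝ) ^ 2 ≠ 0 := pow_ne_zero 2 hp
  -- differentiability
  have hdiff : DifferentiableAt ℝ
      (fun x : ℝ × ℝ =>
      ((2 * B * x.1 ^ 4 + A * x.1 ^ 2 + x.2 ^ 2) / (2 * s * x.1 * x.2),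
        1 / (4 * s) * ((4 * B * x.1 ^ 4 - x.2 ^ 2) / x.1 ^ 2
          + x.1 ^ 2 * (4 * B ^ 2 * x.1 ^ 4 + 4 * A * B * x.1 ^ 2 + A ^ 2) / x.2 ^ 2))) (q, p) := by
    simp only [div_eq_mul_inv]
    apply DifferentiableAt.prodMk
    · exact (((differentiableAt_fst.pow 4).const_mul (2*B)).add
        ((differentiableAt_fst.pow 2).const_mul A) |>.add (differentiableAt_snd.pow 2)).mul
        (((differentiableAt_fst.const_mul (2*s)).mul differentiableAt_snd).inv hden1)
    · exact DifferentiableAt.const_mul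
        (((((differentiableAt_fst.pow 4).const_mul (4*B)).sub
            (differentiableAt_snd.pow 2)).mul ((differentiableAt_fst.pow 2).inv hq2)).add
         (((differentiableAt_fst.pow 2).mul
            ((((differentiableAt_fst.pow 4).const_mul (4*B^2)).add
              ((differentiableAt_fst.pow 2).const_mul (4*A*B))).add_const (A^2))).mul
            ((differentiableAt_snd.pow 2).inv hp2))) _
  refine ⟨hdiff, ?_⟩
  -- partial derivative in q : derivative of t ↦ F (t, p)
  have hv1 : HasDerivAt (fun t : ℝ =>
      ((2 * B * t ^ 4 + A * t ^ 2 + p ^ 2) / (2 * s * t * p),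
        1 / (4 * s) * ((4 * B * t ^ 4 - p ^ 2) / t ^ 2
          + t ^ 2 * (4 * B ^ 2 * t ^ 4 + 4 * A * B * t ^ 2 + A ^ 2) / p ^ 2)))
      ((((2*B) * ((4:ℕ) * q ^ 3) + A * ((2:ℕ) * q ^ 1)) * (2 * s * q * p)
          - (2 * B * q ^ 4 + A * q ^ 2 + p ^ 2) * ((2 * s) * 1 * p)) / (2 * s * q * p) ^ 2,
        1 / (4 * s) * ((((4*B) * ((4:ℕ) * q ^ 3)) * q ^ 2
              - (4 * B * q ^ 4 - p ^ 2) * ((2:ℕ) * q ^ 1)) / (q ^ 2) ^ 2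
          + (((2:ℕ) * q ^ 1) * (4 * B ^ 2 * q ^ 4 + 4 * A * B * q ^ 2 + A ^ 2)
              + q ^ 2 * ((4*B^2) * ((4:ℕ) * q ^ 3) + (4*A*B) * ((2:ℕ) * q ^ 1))) / p ^ 2)) q := by
    refine HasDerivAt.prodMk ?_ ?_
    · exact ((((hasDerivAt_pow 4 q).const_mul (2*B)).add
          ((hasDerivAt_pow 2 q).const_mul A)).add_const (p^2)).div
        (((hasDerivAt_id q).const_mul (2*s)).mul_const p) hden1
    · have hu := (((hasDerivAt_pow 4 q).const_mul (4*B)).sub_const (p^2)).div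
        (hasDerivAt_pow 2 q) hq2
      have hv := ((hasDerivAt_pow 2 q).mul
        ((((hasDerivAt_pow 4 q).const_mul (4*B^2)).add
          ((hasDerivAt_pow 2 q).const_mul (4*A*B))).add_const (A^2))).div_const (p^2)
      exact (hu.add hv).const_mul (1/(4*s))
  have hv2 : HasDerivAt (fun t : ℝ =>
      ((2 * B * q ^ 4 + A * q ^ 2 + t ^ 2) / (2 * s * q * t),
        1 / (4 * s) * ((4 * B * q ^ 4 - t ^ 2) / q ^ 2
          + q ^ 2 * (4 * B ^ 2 * q ^ 4 + 4 * A * B * q ^ 2 + A ^ 2) / t ^ 2)))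
      ((((2:ℕ) * p ^ 1) * (2 * s * q * p)
          - (2 * B * q ^ 4 + A * q ^ 2 + p ^ 2) * (2 * s * q * 1)) / (2 * s * q * p) ^ 2,
        1 / (4 * s) * ((-((2:ℕ) * p ^ 1)) / q ^ 2
          + (0 * p ^ 2 - q ^ 2 * (4 * B ^ 2 * q ^ 4 + 4 * A * B * q ^ 2 + A ^ 2)
              * ((2:ℕ) * p ^ 1)) / (p ^ 2) ^ 2)) p := by
    refine HasDerivAt.prodMk ?_ ?_
    · exact ((hasDerivAt_pow 2 p).const_add (2 * B * q ^ 4 + A * q ^ 2)).div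
        ((hasDerivAt_id p).const_mul (2*s*q)) hden1
    · have hu := (((hasDerivAt_pow 2 p).const_sub (4 * B * q ^ 4)).div_const (q^2))
      have hv := ((hasDerivAt_const p (q ^ 2 * (4 * B ^ 2 * q ^ 4 + 4 * A * B * q ^ 2 + A ^ 2))).div
        (hasDerivAt_pow 2 p) hp2)
      exact (hu.add hv).const_mul (1/(4*s))
  -- identify with directional derivatives of F
  have hL1 : HasDerivAt (fun t : ℝ => (t, p)) ((1:ℝ), (0:ℝ)) q :=
    (hasDerivAt_id q).prodMk (hasDerivAt_const q p)
  have hL2 : HasDerivAt (fun t : ℝ => (q, t)) ((0:ℝ), (1:ℝ)) p :=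
    (hasDerivAt_const p q).prodMk (hasDerivAt_id p)
  have hc1 := hdiff.hasFDerivAt.comp_hasDerivAt q hL1
  have hc2 := hdiff.hasFDerivAt.comp_hasDerivAt p hL2
  have e1 := hc1.unique hv1
  have e2 := hc2.unique hv2
  -- compute the determinant
  rw [ContinuousLinearMap.det, ← LinearMap.det_toMatrix (Module.Basis.finTwoProd ℝ),
    Matrix.det_fin_two]
  simp only [LinearMap.toMatrix_apply, Module.Basis.finTwoProd_zero, Module.Basis.finTwoProd_one,
    ContinuousLinearMap.coe_coe, Module.Basis.coe_finTwoProd_repr, e1, e2,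
    Matrix.cons_val_zero, Matrix.cons_val_one, Matrix.head_cons]
  have hB' : B = -s ^ 2 := by linarith
  subst hB'
  field_simp
  ring
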